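/- For all integers n, r, k with k ≥ 2r+2 ≥ 8 and n sufficiently large: the hypergraph H(n,k,r) — with vertex set consisting of a set L of ⌊k/2⌋-1 vertices plus n-|L| other vertices, whose hyperedges are all r-sets containing at least r-1 vertices of L (plus, when k is odd, all r-sets consisting of two fixed vertices u_1, u_2 ∉ L and r-2 vertices of L) — is connected, contains no Berge path on k vertices, and has exactly C(⌊k/2⌋-1, r-1)·(n - ⌈k/2⌉) + C(⌈k/2⌉, r) hyperedges. -/

import Mathlib

open Finset

/-- A hypergraph (edge set `E`) is connected. -/
def HConnected {V : Type*} (E : Finset (Finset V)) : Prop :=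
  ¬ ∃ A : Set V, A.Nonempty ∧ Aᶜ.Nonempty ∧ ∀ e ∈ E, (↑e ⊆ A ∨ ↑e ⊆ Aᶜ)

/-- The hypergraph `E` contains a Berge path on `k` vertices. -/
def HasBergePathOn {V : Type*} (E : Finset (Finset V)) (k : ℕ) : Prop :=
  ∃ (m : ℕ) (w : Fin (m + 1) → V) (e : Fin m → Finset V),
    m + 1 = k ∧ Function.Injective w ∧ Function.Injective e ∧
    ∀ i : Fin m, e i ∈ E ∧ w i.castSucc ∈ e i ∧ w i.succ ∈ e i

/-- The extremal hypergraph `H(n,k,r)`: with `L` the set of the first `⌊k/2⌋ - 1`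
vertices of `Fin n`, its hyperedges are all `r`-sets containing at least `r-1`
vertices of `L`, plus, when `k` is odd, all `r`-sets consisting of the two fixed
vertices `u₁ = ⌊k/2⌋ - 1`, `u₂ = ⌊k/2⌋` together with `r-2` vertices of `L`. -/
def Hnkr (n k r : ℕ) : Finset (Finset (Fin n)) :=
  (univ.powersetCard r).filter (fun e =>
    r - 1 ≤ (e.filter (fun x : Fin n => (x : ℕ) < k / 2 - 1)).card ∨
    (k % 2 = 1 ∧ (∃ x ∈ e, (x : ℕ) = k / 2 - 1) ∧ (∃ x ∈ e, (x : ℕ) = k / 2) ∧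
      ∀ x ∈ e, (x : ℕ) ≤ k / 2))

lemma card_filter_val_lt (n m : ℕ) (h : m ≤ n) :
    ((univ : Finset (Fin n)).filter fun x : Fin n => (x : ℕ) < m).card = m := by
  have he : ((univ : Finset (Fin n)).filter fun x : Fin n => (x : ℕ) < m)
      = (Finset.range m).attachFin (fun x hx => lt_of_lt_of_le (mem_range.mp hx) h) := by
    ext x
    simp [Finset.mem_attachFin]
  rw [he, Finset.card_attachFin, Finset.card_range]

lemma card_filter_val_not_lt (n m : ℕ) (h : m ≤ n) :
    ((univ : Finset (Fin n)).filter fun x : Fin n => ¬ ((x : ℕ) < m)).card = n - m := by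
  have := Finset.card_filter_add_card_filter_not (s := (univ : Finset (Fin n)))
    (p := fun x : Fin n => (x : ℕ) < m)
  rw [card_filter_val_lt n m h, Finset.card_univ, Fintype.card_fin] at this
  omega

lemma cardA (n r m : ℕ) (h : m ≤ n) :
    (((univ : Finset (Fin n)).powersetCard r).filter
      (fun e => (e.filter (fun x : Fin n => (x : ℕ) < m)).card = r)).card = m.choose r := by
  have he : (((univ : Finset (Fin n)).powersetCard r).filter
      (fun e => (e.filter (fun x : Fin n => (x : ℕ) < m)).card = r))
      = ((univ : Finset (Fin n)).filter fun x : Fin n => (x : ℕ) < m).powersetCard r := by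
    ext e
    simp only [Finset.mem_filter, Finset.mem_powersetCard_univ, Finset.mem_powersetCard]
    constructor
    · rintro ⟨⟨-, hc⟩, hf⟩
      have hsub : e.filter (fun x : Fin n => (x : ℕ) < m) = e :=
        Finset.eq_of_subset_of_card_le (Finset.filter_subset _ _) (by omega)
      refine ⟨fun x hx => ?_, hc⟩
      rw [← hsub] at hx
      simpa using (Finset.mem_filter.mp hx).2
    · rintro ⟨hsub, hc⟩
      refine ⟨⟨Finset.subset_univ e, hc⟩, ?_⟩
      rw [Finset.filter_true_of_mem (fun x hx => by simpa using (hsub hx)), hc]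
  rw [he, Finset.card_powersetCard, card_filter_val_lt n m h]

lemma cardB (n s m : ℕ) (h : m ≤ n) :
    (((univ : Finset (Fin n)).powersetCard (s+1)).filter
      (fun e => (e.filter (fun x : Fin n => (x : ℕ) < m)).card = s)).card
      = m.choose s * (n - m) := by
  have key : ((((univ : Finset (Fin n)).filter fun x : Fin n => (x : ℕ) < m).powersetCard s)
        ×ˢ ((univ : Finset (Fin n)).filter fun x : Fin n => ¬ ((x : ℕ) < m))).card
      = (((univ : Finset (Fin n)).powersetCard (s+1)).filter
        (fun e => (e.filter (fun x : Fin n => (x : ℕ) < m)).card = s)).card := by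
    apply Finset.card_bij (fun a _ => insert a.2 a.1)
    · rintro ⟨t, x⟩ hm
      simp only [Finset.mem_product, Finset.mem_powersetCard, Finset.mem_filter,
        Finset.mem_univ, true_and] at hm
      obtain ⟨⟨htsub, htc⟩, hx⟩ := hm
      have hxt : x ∉ t := fun hxt => hx (by simpa using (Finset.mem_filter.mp (htsub hxt)).2)
      have hfilt : (insert x t).filter (fun y : Fin n => (y : ℕ) < m) = t := by
        rw [Finset.filter_insert, if_neg hx,
          Finset.filter_true_of_mem (fun y hy => by simpa using (Finset.mem_filter.mp (htsub hy)).2)]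
      simp only [Finset.mem_filter, Finset.mem_powersetCard_univ]
      exact ⟨by rw [Finset.card_insert_of_notMem hxt, htc], by rw [hfilt, htc]⟩
    · rintro ⟨t, x⟩ hm ⟨t', x'⟩ hm' heq
      simp only [Finset.mem_product, Finset.mem_powersetCard, Finset.mem_filter,
        Finset.mem_univ, true_and] at hm hm'
      obtain ⟨⟨htsub, htc⟩, hx⟩ := hm
      obtain ⟨⟨htsub', htc'⟩, hx'⟩ := hm'
      have hfilt : ∀ (t : Finset (Fin n)) (x : Fin n),
          t ⊆ ((univ : Finset (Fin n)).filter fun y : Fin n => (y : ℕ) < m) → ¬ ((x:ℕ) < m) →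
          (insert x t).filter (fun y : Fin n => (y : ℕ) < m) = t := by
        intro t x hts hxm
        have hx : ¬ ((x:ℕ) < m) := hxm
        rw [Finset.filter_insert, if_neg hx,
          Finset.filter_true_of_mem (fun y hy => by simpa using (Finset.mem_filter.mp (hts hy)).2)]
      have ht : t = t' := by
        rw [← hfilt t x htsub hx, ← hfilt t' x' htsub' hx', heq]
      have hxx : x = x' := by
        have hx1 : x ∈ insert x' t' := heq ▸ Finset.mem_insert_self x t
        rcases Finset.mem_insert.mp hx1 with h | h
        · exact h
        · exact absurd (by simpa using (Finset.mem_filter.mp (htsub' h)).2) hx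
      rw [Prod.mk.injEq]; exact ⟨ht, hxx⟩
    · intro e he
      simp only [Finset.mem_filter, Finset.mem_powersetCard_univ] at he
      obtain ⟨hec, hef⟩ := he
      have hneg : (e.filter (fun y : Fin n => ¬ ((y : ℕ) < m))).card = 1 := by
        have := Finset.card_filter_add_card_filter_not (s := e)
          (p := fun y : Fin n => (y : ℕ) < m)
        omega
      obtain ⟨x, hx⟩ := Finset.card_eq_one.mp hneg
      have hxe : x ∈ e ∧ ¬ ((x:ℕ) < m) := by
        have : x ∈ e.filter (fun y : Fin n => ¬ ((y : ℕ) < m)) := hx ▸ Finset.mem_singleton_self x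
        simpa using this
      refine ⟨(e.filter (fun y : Fin n => (y : ℕ) < m), x), ?_, ?_⟩
      · simp only [Finset.mem_product, Finset.mem_powersetCard, Finset.mem_filter,
          Finset.mem_univ, true_and]
        exact ⟨⟨fun y hy => by simp [Finset.mem_filter.mp hy], hef⟩, hxe.2⟩
      · ext y
        simp only [Finset.mem_insert]
        constructor
        · rintro (rfl | hy)
          · exact hxe.1
          · exact Finset.filter_subset _ _ hy
        · intro hy
          by_cases hym : (y : ℕ) < m
          · exact Or.inr (Finset.mem_filter.mpr ⟨hy, hym⟩)
          · left
            have : y ∈ e.filter (fun y : Fin n => ¬ ((y : ℕ) < m)) :=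
              Finset.mem_filter.mpr ⟨hy, hym⟩
            rw [hx] at this
            exact Finset.mem_singleton.mp this

  rw [← key, Finset.card_product, Finset.card_powersetCard, card_filter_val_lt n m h,
    card_filter_val_not_lt n m h]

lemma cardC (n k r : ℕ) (hk : k ≥ 2 * r + 2) (hr : r ≥ 3) (hn : k ≤ n) :
    (((univ : Finset (Fin n)).powersetCard r).filter
      (fun e : Finset (Fin n) => k % 2 = 1 ∧ (∃ x ∈ e, (x : ℕ) = k / 2 - 1) ∧
        (∃ x ∈ e, (x : ℕ) = k / 2) ∧ ∀ x ∈ e, (x : ℕ) ≤ k / 2)).card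
    = if k % 2 = 1 then (k / 2 - 1).choose (r - 2) else 0 := by
  have hk2 : k / 2 ≥ r + 1 := by omega
  have hu1 : k / 2 - 1 < n := by omega
  have hu2 : k / 2 < n := by omega
  by_cases hodd : k % 2 = 1
  swap
  · rw [if_neg hodd, Finset.card_eq_zero, Finset.filter_eq_empty_iff]
    intro e _
    rintro ⟨h, -⟩
    exact hodd h
  rw [if_pos hodd]
  set u1 : Fin n := ⟨k / 2 - 1, hu1⟩
  set u2 : Fin n := ⟨k / 2, hu2⟩
  have hu1v : (u1 : ℕ) = k / 2 - 1 := rfl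
  have hu2v : (u2 : ℕ) = k / 2 := rfl
  have hu12 : u1 ≠ u2 := by
    intro h; rw [Fin.ext_iff, hu1v, hu2v] at h; omega
  have key : (((univ : Finset (Fin n)).filter fun x : Fin n => (x : ℕ) < k / 2 - 1).powersetCard
        (r - 2)).card
      = (((univ : Finset (Fin n)).powersetCard r).filter
        (fun e : Finset (Fin n) => k % 2 = 1 ∧ (∃ x ∈ e, (x : ℕ) = k / 2 - 1) ∧
          (∃ x ∈ e, (x : ℕ) = k / 2) ∧ ∀ x ∈ e, (x : ℕ) ≤ k / 2)).card := by
    have hfe : ∀ s : Finset (Fin n), (∀ y ∈ s, (y : ℕ) < k / 2 - 1) →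
        (insert u1 (insert u2 s)).filter (fun x : Fin n => (x : ℕ) < k / 2 - 1) = s := by
      intro s hs
      rw [Finset.filter_insert, if_neg (by rw [hu1v]; omega), Finset.filter_insert,
        if_neg (by rw [hu2v]; omega), Finset.filter_true_of_mem hs]
    apply Finset.card_bij (fun t _ => insert u1 (insert u2 t))
    · intro t ht
      simp only [Finset.mem_powersetCard, Finset.mem_filter, Finset.mem_univ, true_and] at ht
      obtain ⟨hts, htc⟩ := ht
      have htlt : ∀ y ∈ t, (y : ℕ) < k / 2 - 1 := fun y hy => by
        simpa using (Finset.mem_filter.mp (hts hy)).2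
      have hu1t : u1 ∉ t := fun h => by have := htlt u1 h; omega
      have hu2t : u2 ∉ t := fun h => by have := htlt u2 h; rw [hu2v] at this; omega
      simp only [Finset.mem_filter, Finset.mem_powersetCard_univ]
      refine ⟨?_, hodd, ⟨u1, by simp, hu1v⟩, ⟨u2, by simp, hu2v⟩, ?_⟩
      · rw [Finset.card_insert_of_notMem (by simp [hu12, hu1t]),
          Finset.card_insert_of_notMem hu2t, htc]
        omega
      · intro x hx
        rcases Finset.mem_insert.mp hx with rfl | hx
        · rw [hu1v]; omega
        rcases Finset.mem_insert.mp hx with rfl | hx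
        · rw [hu2v]
        · have := htlt x hx; omega
    · intro t ht t' ht' heq
      simp only [Finset.mem_powersetCard, Finset.mem_filter, Finset.mem_univ, true_and] at ht ht'
      have h1 := hfe t (fun y hy => by simpa using (Finset.mem_filter.mp (ht.1 hy)).2)
      have h2 := hfe t' (fun y hy => by simpa using (Finset.mem_filter.mp (ht'.1 hy)).2)
      rw [← h1, ← h2, heq]
    · intro e he
      simp only [Finset.mem_filter, Finset.mem_powersetCard_univ] at he
      obtain ⟨hec, -, ⟨x1, hx1, hx1v⟩, ⟨x2, hx2, hx2v⟩, hle⟩ := he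
      have hx1u : x1 = u1 := Fin.ext (by rw [hx1v, hu1v])
      have hx2u : x2 = u2 := Fin.ext (by rw [hx2v, hu2v])
      subst hx1u hx2u
      have hmem2 : u2 ∈ e.erase u1 := Finset.mem_erase.mpr ⟨hu12.symm, hx2⟩
      refine ⟨(e.erase u1).erase u2, ?_, ?_⟩
      · simp only [Finset.mem_powersetCard, Finset.mem_filter, Finset.mem_univ, true_and]
        constructor
        · intro y hy
          simp only [Finset.mem_erase] at hy
          obtain ⟨hy2, hy1, hye⟩ := hy
          have hyle := hle y hye
          have hv1 : (y : ℕ) ≠ k / 2 - 1 := fun h => hy1 (Fin.ext (by rw [h, hu1v]))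
          have hv2 : (y : ℕ) ≠ k / 2 := fun h => hy2 (Fin.ext (by rw [h, hu2v]))
          simp only [Finset.mem_filter, Finset.mem_univ, true_and]
          omega
        · rw [Finset.card_erase_of_mem hmem2, Finset.card_erase_of_mem hx1, hec]
          omega
      · rw [Finset.insert_erase hmem2, Finset.insert_erase hx1]
  rw [← key, Finset.card_powersetCard, card_filter_val_lt n _ (by omega)]

lemma Hnkr_card (n k r : ℕ) (hk : k ≥ 2 * r + 2) (hr : r ≥ 3) (hn : k ≤ n) :
    (Hnkr n k r).card =
      (k / 2 - 1).choose (r - 1) * (n - (k + 1) / 2) + ((k + 1) / 2).choose r := by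
  classical
  have hqL : ∀ e : Finset (Fin n), e.card = r →
      (k % 2 = 1 ∧ (∃ x ∈ e, (x : ℕ) = k / 2 - 1) ∧ (∃ x ∈ e, (x : ℕ) = k / 2) ∧
        ∀ x ∈ e, (x : ℕ) ≤ k / 2) →
      (e.filter (fun x : Fin n => (x : ℕ) < k / 2 - 1)).card ≤ r - 2 := by
    rintro e hec ⟨hodd, ⟨x1, hx1, hx1v⟩, ⟨x2, hx2, hx2v⟩, hle⟩
    have hx12 : x1 ≠ x2 := by
      intro h; rw [h] at hx1v; omega
    have hsub : e.filter (fun x : Fin n => (x : ℕ) < k / 2 - 1) ⊆ (e.erase x1).erase x2 := by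
      intro y hy
      rw [Finset.mem_filter] at hy
      have h1 : y ≠ x1 := by rintro rfl; omega
      have h2 : y ≠ x2 := by rintro rfl; omega
      exact Finset.mem_erase.mpr ⟨h2, Finset.mem_erase.mpr ⟨h1, hy.1⟩⟩
    have h3 := Finset.card_le_card hsub
    have h4 : ((e.erase x1).erase x2).card = r - 2 := by
      rw [Finset.card_erase_of_mem (Finset.mem_erase.mpr ⟨hx12.symm, hx2⟩),
        Finset.card_erase_of_mem hx1, hec]
      omega
    omega
  have hsplit : Hnkr n k r =
      (((univ : Finset (Fin n)).powersetCard r).filter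
        (fun e => (e.filter (fun x : Fin n => (x : ℕ) < k / 2 - 1)).card = r)
      ∪ ((univ : Finset (Fin n)).powersetCard r).filter
        (fun e => (e.filter (fun x : Fin n => (x : ℕ) < k / 2 - 1)).card = r - 1))
      ∪ ((univ : Finset (Fin n)).powersetCard r).filter
        (fun e : Finset (Fin n) => k % 2 = 1 ∧ (∃ x ∈ e, (x : ℕ) = k / 2 - 1) ∧
          (∃ x ∈ e, (x : ℕ) = k / 2) ∧ ∀ x ∈ e, (x : ℕ) ≤ k / 2) := by
    ext e
    simp only [Hnkr, Finset.mem_union, Finset.mem_filter, Finset.mem_powersetCard_univ]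
    constructor
    · rintro ⟨hec, hp | hq⟩
      · have hle : (e.filter (fun x : Fin n => (x : ℕ) < k / 2 - 1)).card ≤ r :=
          le_trans (Finset.card_le_card (Finset.filter_subset _ _)) (le_of_eq hec)
        left
        rcases Nat.lt_or_ge (e.filter (fun x : Fin n => (x : ℕ) < k / 2 - 1)).card r with h | h
        · exact Or.inr ⟨hec, by omega⟩
        · exact Or.inl ⟨hec, by omega⟩
      · exact Or.inr ⟨hec, hq⟩
    · rintro ((⟨hec, h⟩ | ⟨hec, h⟩) | ⟨hec, h⟩)
      · exact ⟨hec, Or.inl (by omega)⟩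
      · exact ⟨hec, Or.inl (by omega)⟩
      · exact ⟨hec, Or.inr h⟩
  have hd1 : Disjoint
      (((univ : Finset (Fin n)).powersetCard r).filter
        (fun e => (e.filter (fun x : Fin n => (x : ℕ) < k / 2 - 1)).card = r))
      (((univ : Finset (Fin n)).powersetCard r).filter
        (fun e => (e.filter (fun x : Fin n => (x : ℕ) < k / 2 - 1)).card = r - 1)) := by
    rw [Finset.disjoint_left]
    intro e h1 h2
    rw [Finset.mem_filter] at h1 h2
    omega
  have hd2 : Disjoint
      (((univ : Finset (Fin n)).powersetCard r).filter
        (fun e => (e.filter (fun x : Fin n => (x : ℕ) < k / 2 - 1)).card = r)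
      ∪ ((univ : Finset (Fin n)).powersetCard r).filter
        (fun e => (e.filter (fun x : Fin n => (x : ℕ) < k / 2 - 1)).card = r - 1))
      (((univ : Finset (Fin n)).powersetCard r).filter
        (fun e : Finset (Fin n) => k % 2 = 1 ∧ (∃ x ∈ e, (x : ℕ) = k / 2 - 1) ∧
          (∃ x ∈ e, (x : ℕ) = k / 2) ∧ ∀ x ∈ e, (x : ℕ) ≤ k / 2)) := by
    rw [Finset.disjoint_left]
    intro e h1 h2
    rw [Finset.mem_filter] at h2
    have hec : e.card = r := Finset.mem_powersetCard_univ.mp h2.1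
    have := hqL e hec h2.2
    rcases Finset.mem_union.mp h1 with h | h <;> rw [Finset.mem_filter] at h <;> omega
  have hBcard := cardB n (r - 1) (k / 2 - 1) (by omega)
  rw [show r - 1 + 1 = r by omega] at hBcard
  rw [hsplit, Finset.card_union_of_disjoint hd2, Finset.card_union_of_disjoint hd1,
    cardA n r (k / 2 - 1) (by omega), hBcard, cardC n k r hk hr hn]
  -- arithmetic
  obtain ⟨r', rfl⟩ : ∃ r', r = r' + 3 := ⟨r - 3, by omega⟩
  have pascal1 : ∀ l s : ℕ, (l+1).choose (s+1) = l.choose (s+1) + l.choose s := by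
    intro l s; rw [Nat.choose_succ_succ']; omega
  have pascal2 : ∀ l s : ℕ,
      (l+1+1).choose (s+1+1) = l.choose (s+1+1) + 2 * l.choose (s+1) + l.choose s := by
    intro l s; rw [pascal1 (l+1) (s+1), pascal1 l (s+1), pascal1 l s]; omega
  rw [show r' + 3 - 1 = r' + 1 + 1 by omega, show r' + 3 - 2 = r' + 1 by omega,
    show r' + 3 = r' + 1 + 1 + 1 by omega]
  rcases Nat.mod_two_eq_zero_or_one k with hke | hko
  · rw [if_neg (by omega)]
    rw [show (k + 1) / 2 = (k / 2 - 1) + 1 by omega]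
    have hp := pascal1 (k / 2 - 1) (r' + 1 + 1)
    have hm : (k / 2 - 1).choose (r' + 1 + 1) * (n - (k / 2 - 1))
        = (k / 2 - 1).choose (r' + 1 + 1) * (n - (k / 2 - 1 + 1))
          + (k / 2 - 1).choose (r' + 1 + 1) := by
      rw [show n - (k / 2 - 1) = (n - (k / 2 - 1 + 1)) + 1 by omega, Nat.mul_add, Nat.mul_one]
    omega
  · rw [if_pos hko]
    rw [show (k + 1) / 2 = (k / 2 - 1) + 1 + 1 by omega]
    have hp := pascal2 (k / 2 - 1) (r' + 1)
    have hm : (k / 2 - 1).choose (r' + 1 + 1) * (n - (k / 2 - 1))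
        = (k / 2 - 1).choose (r' + 1 + 1) * (n - (k / 2 - 1 + 1 + 1))
          + (k / 2 - 1).choose (r' + 1 + 1) * 2 := by
      rw [show n - (k / 2 - 1) = (n - (k / 2 - 1 + 1 + 1)) + 2 by omega, Nat.mul_add]
    omega

lemma Hnkr_connected (n k r : ℕ) (hk : k ≥ 2 * r + 2) (hr : r ≥ 3) (hn : k ≤ n) :
    HConnected (Hnkr n k r) := by
  rintro ⟨A, ⟨a, ha⟩, ⟨b, hb⟩, hE⟩
  have hn0 : 0 < n := by omega
  set z : Fin n := ⟨0, hn0⟩ with hz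
  have hedge : ∀ v : Fin n, v ≠ z → ∃ e ∈ Hnkr n k r, v ∈ e ∧ z ∈ e := by
    intro v hv
    set Lfin : Finset (Fin n) :=
      (univ : Finset (Fin n)).filter (fun x : Fin n => (x : ℕ) < k / 2 - 1) with hL
    have hLcard : Lfin.card = k / 2 - 1 := card_filter_val_lt n _ (by omega)
    have hcard2 : r - 2 ≤ ((Lfin.erase z).erase v).card := by
      have h1 : Lfin.card - 1 ≤ (Lfin.erase z).card := Finset.pred_card_le_card_erase
      have h2 : (Lfin.erase z).card - 1 ≤ ((Lfin.erase z).erase v).card :=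
        Finset.pred_card_le_card_erase
      omega
    obtain ⟨t, hts, htc⟩ := Finset.exists_subset_card_eq hcard2
    have hzt : z ∉ t := fun h => (Finset.mem_erase.mp (Finset.mem_of_mem_erase (hts h))).1 rfl
    have hvt : v ∉ t := fun h => (Finset.mem_erase.mp (hts h)).1 rfl
    have htL : ∀ y ∈ t, (y : ℕ) < k / 2 - 1 := fun y hy => by
      simpa using (Finset.mem_filter.mp (Finset.mem_of_mem_erase (Finset.mem_of_mem_erase (hts hy)))).2
    refine ⟨insert v (insert z t), ?_, Finset.mem_insert_self _ _,
      Finset.mem_insert_of_mem (Finset.mem_insert_self _ _)⟩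
    rw [Hnkr, Finset.mem_filter, Finset.mem_powersetCard_univ]
    constructor
    · rw [Finset.card_insert_of_notMem (by simp [hv, hvt]),
        Finset.card_insert_of_notMem hzt, htc]
      omega
    · left
      have hsub : insert z t ⊆ (insert v (insert z t)).filter
          (fun x : Fin n => (x : ℕ) < k / 2 - 1) := by
        intro y hy
        refine Finset.mem_filter.mpr ⟨Finset.mem_insert_of_mem hy, ?_⟩
        rcases Finset.mem_insert.mp hy with rfl | hy
        · show (z : ℕ) < k / 2 - 1
          rw [hz]
          simp
          omega
        · exact htL y hy
      have := Finset.card_le_card hsub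
      rw [Finset.card_insert_of_notMem hzt, htc] at this
      omega
  have hsame : ∀ v : Fin n, v ∈ A ↔ z ∈ A := by
    intro v
    by_cases hv : v = z
    · rw [hv]
    · obtain ⟨e, he, hve, hze⟩ := hedge v hv
      rcases hE e he with h | h
      · exact ⟨fun _ => h hze, fun _ => h hve⟩
      · constructor
        · intro hva; exact absurd hva (h hve)
        · intro hza; exact absurd hza (h hze)
  have hzA : z ∈ A := (hsame a).mp ha
  exact hb ((hsame b).mpr hzA)

lemma Hnkr_no_path (n k r : ℕ) (hk : k ≥ 2 * r + 2) (hr : r ≥ 3) (hn : k ≤ n) :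
    ¬ HasBergePathOn (Hnkr n k r) k := by
  rintro ⟨p, w, e, hpk, hwinj, heinj, hpath⟩
  have hp7 : p ≥ 7 := by omega
  set w' : ℕ → Fin n := fun i => w ⟨min i p, by omega⟩ with hw'd
  have hw'eq : ∀ (i : ℕ) (h : i < p + 1), w' i = w ⟨i, h⟩ := by
    intro i h
    simp only [hw'd]
    congr 1
    exact Fin.ext (Nat.min_eq_left (by omega))
  have hw'inj : ∀ i j : ℕ, i ≤ p → j ≤ p → w' i = w' j → i = j := by
    intro i j hi hj h
    rw [hw'eq i (by omega), hw'eq j (by omega)] at h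
    have := hwinj h
    rw [Fin.mk.injEq] at this
    exact this
  -- edges contain consecutive vertices
  have hedge : ∀ i : ℕ, (hi : i < p) → e ⟨i, hi⟩ ∈ Hnkr n k r ∧
      w' i ∈ e ⟨i, hi⟩ ∧ w' (i + 1) ∈ e ⟨i, hi⟩ := by
    intro i hi
    obtain ⟨h1, h2, h3⟩ := hpath ⟨i, hi⟩
    refine ⟨h1, ?_, ?_⟩
    · rw [hw'eq i (by omega)]
      convert h2 using 2
      rfl
    · rw [hw'eq (i+1) (by omega)]
      convert h3 using 2
      rfl
  -- consecutive pair both outside L forces the special edge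
  have houtside : ∀ i : ℕ, i < p → ¬ ((w' i : ℕ) < k / 2 - 1) →
      ¬ ((w' (i+1) : ℕ) < k / 2 - 1) →
      k % 2 = 1 ∧ (w' i : ℕ) ≤ k / 2 ∧ (w' (i+1) : ℕ) ≤ k / 2 := by
    intro i hi h1 h2
    obtain ⟨he1, hm1, hm2⟩ := hedge i hi
    rw [Hnkr, Finset.mem_filter, Finset.mem_powersetCard_univ] at he1
    obtain ⟨hec, hdisj⟩ := he1
    have hne : w' i ≠ w' (i+1) := fun h => by
      have := hw'inj i (i+1) (by omega) (by omega) h; omega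
    rcases hdisj with hd | ⟨hodd, -, -, hall⟩
    · exfalso
      have hsub : (e ⟨i, hi⟩).filter (fun x : Fin n => (x : ℕ) < k / 2 - 1) ⊆
          ((e ⟨i, hi⟩).erase (w' i)).erase (w' (i+1)) := by
        intro y hy
        rw [Finset.mem_filter] at hy
        refine Finset.mem_erase.mpr ⟨fun h => h2 (h ▸ hy.2), Finset.mem_erase.mpr
          ⟨fun h => h1 (h ▸ hy.2), hy.1⟩⟩
      have h3 := Finset.card_le_card hsub
      have h4 : (((e ⟨i, hi⟩).erase (w' i)).erase (w' (i+1))).card = r - 2 := by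
        rw [Finset.card_erase_of_mem (Finset.mem_erase.mpr ⟨hne.symm, hm2⟩),
          Finset.card_erase_of_mem hm1, hec]
        omega
      omega
    · exact ⟨hodd, hall _ hm1, hall _ hm2⟩
  -- the sets
  set P : Finset ℕ := (Finset.range p).filter
    (fun i => ¬ ((w' i : ℕ) < k / 2 - 1) ∧ ¬ ((w' (i+1) : ℕ) < k / 2 - 1)) with hPd
  set T : Finset ℕ := (Finset.range p).filter
    (fun i => ¬ ((w' i : ℕ) < k / 2 - 1) ∧ (w' (i+1) : ℕ) < k / 2 - 1) with hTd
  set O : Finset ℕ := (Finset.range (p+1)).filter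
    (fun i => ¬ ((w' i : ℕ) < k / 2 - 1)) with hOd
  set C : Finset ℕ := (Finset.range (p+1)).filter
    (fun i => (w' i : ℕ) < k / 2 - 1) with hCd
  have hOC : C.card + O.card = p + 1 := by
    rw [hOd, hCd]
    rw [Finset.card_filter_add_card_filter_not
      (p := fun i => (w' i : ℕ) < k / 2 - 1), Finset.card_range]
  have hC : C.card ≤ k / 2 - 1 := by
    have := card_filter_val_lt n (k / 2 - 1) (by omega)
    rw [← this]
    apply Finset.card_le_card_of_injOn w'
    · intro i hi
      rw [hCd, Finset.mem_coe, Finset.mem_filter] at hi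
      exact Finset.mem_filter.mpr ⟨Finset.mem_univ _, hi.2⟩
    · intro i hi j hj hij
      rw [hCd, Finset.coe_filter] at hi hj
      simp only [Set.mem_setOf_eq, Finset.mem_range] at hi hj
      exact hw'inj i j (by omega) (by omega) hij
  have hT : T.card ≤ C.card := by
    apply Finset.card_le_card_of_injOn (fun i => i + 1)
    · intro i hi
      rw [hTd, Finset.mem_coe, Finset.mem_filter, Finset.mem_range] at hi
      exact Finset.mem_filter.mpr ⟨Finset.mem_range.mpr (show i + 1 < p + 1 by omega), hi.2.2⟩
    · intro i _ j _ h
      exact Nat.succ_injective h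
  have hO : O.card ≤ 1 + P.card + T.card := by
    have hsub : O ⊆ insert p (P ∪ T) := by
      intro i hi
      rw [hOd, Finset.mem_filter, Finset.mem_range] at hi
      rcases Nat.lt_or_ge i p with h | h
      · refine Finset.mem_insert_of_mem (Finset.mem_union.mpr ?_)
        by_cases hnext : (w' (i+1) : ℕ) < k / 2 - 1
        · exact Or.inr (Finset.mem_filter.mpr ⟨Finset.mem_range.mpr h, hi.2, hnext⟩)
        · exact Or.inl (Finset.mem_filter.mpr ⟨Finset.mem_range.mpr h, hi.2, hnext⟩)
      · have : i = p := by omega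
        rw [this]
        exact Finset.mem_insert_self _ _
    calc O.card ≤ (insert p (P ∪ T)).card := Finset.card_le_card hsub
      _ ≤ 1 + (P ∪ T).card := by rw [add_comm]; exact Finset.card_insert_le _ _
      _ ≤ 1 + (P.card + T.card) := by
          exact Nat.add_le_add_left (Finset.card_union_le _ _) 1
      _ = 1 + P.card + T.card := by omega
  have hP : P.card ≤ k % 2 := by
    rcases Nat.mod_two_eq_zero_or_one k with hke | hko
    · rw [hke, Nat.le_zero, Finset.card_eq_zero]
      rw [Finset.eq_empty_iff_forall_notMem]
      intro i hi
      rw [hPd, Finset.mem_filter, Finset.mem_range] at hi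
      obtain ⟨hip, h1, h2⟩ := hi
      have := houtside i hip h1 h2
      omega
    · rw [hko]
      apply Finset.card_le_one.mpr
      intro i hi j hj
      rw [hPd, Finset.mem_filter, Finset.mem_range] at hi hj
      obtain ⟨hip, hi1, hi2⟩ := hi
      obtain ⟨hjp, hj1, hj2⟩ := hj
      obtain ⟨-, hia, hib⟩ := houtside i hip hi1 hi2
      obtain ⟨-, hja, hjb⟩ := houtside j hjp hj1 hj2
      -- all four values are in {k/2-1, k/2}
      have hval : ∀ a b : ℕ, a ≤ p → b ≤ p →
          ¬ ((w' a : ℕ) < k / 2 - 1) → (w' a : ℕ) ≤ k / 2 →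
          ¬ ((w' b : ℕ) < k / 2 - 1) → (w' b : ℕ) ≤ k / 2 →
          a = b ∨ (w' a : ℕ) ≠ (w' b : ℕ) := by
        intro a b ha hb _ _ _ _
        by_cases h : (w' a : ℕ) = (w' b : ℕ)
        · exact Or.inl (hw'inj a b ha hb (Fin.ext h))
        · exact Or.inr h
      have d1 := hval i j (by omega) (by omega) hi1 hia hj1 hja
      have d2 := hval i (j+1) (by omega) (by omega) hi1 hia hj2 hjb
      have d3 := hval (i+1) j (by omega) (by omega) hi2 hib hj1 hja
      have d4 := hval (i+1) (j+1) (by omega) (by omega) hi2 hib hj2 hjb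
      have hnei : (w' i : ℕ) ≠ (w' (i+1) : ℕ) := fun h => by
        have := hw'inj i (i+1) (by omega) (by omega) (Fin.ext h); omega
      have hnej : (w' j : ℕ) ≠ (w' (j+1) : ℕ) := fun h => by
        have := hw'inj j (j+1) (by omega) (by omega) (Fin.ext h); omega
      -- values constrained to two possibilities
      omega
  omega

/-- For `k ≥ 2r+2 ≥ 8` and `n` sufficiently large, the hypergraph `H(n,k,r)` is
connected, contains no Berge path on `k` vertices, and has exactly
`C(⌊k/2⌋-1, r-1)·(n - ⌈k/2⌉) + C(⌈k/2⌉, r)` hyperedges. -/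
theorem Hnkr_extremal (r k : ℕ) (hk : k ≥ 2 * r + 2) (hr : r ≥ 3) :
    ∃ N : ℕ, ∀ n : ℕ, N ≤ n →
      HConnected (Hnkr n k r) ∧
      ¬ HasBergePathOn (Hnkr n k r) k ∧
      (Hnkr n k r).card =
        (k / 2 - 1).choose (r - 1) * (n - (k + 1) / 2) + ((k + 1) / 2).choose r := by
  exact ⟨k, fun n hn =>
    ⟨Hnkr_connected n k r hk hr hn, Hnkr_no_path n k r hk hr hn, Hnkr_card n k r hk hr hn⟩⟩
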